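/- Let H be a complex Hilbert space and X : H → H a bounded linear operator. Set R = X*X + XX*. Then w(X)⁴ ≤ (1/16)‖R‖² + (1/4)w(X²)² + (1/8)w(X²R + RX²). -/

import Mathlib

noncomputable def numRadius {H : Type*} [NormedAddCommGroup H] [InnerProductSpace ℂ H]
    (T : H →L[ℂ] H) : ℝ :=
  sSup {r : ℝ | ∃ x : H, ‖x‖ = 1 ∧ r = ‖(inner ℂ (T x) x : ℂ)‖}

section Aux

open ContinuousLinearMap ComplexConjugate

variable {H : Type*} [NormedAddCommGroup H] [InnerProductSpace ℂ H]

local notation "⟪" x ", " y "⟫" => @inner ℂ _ _ x y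

lemma numRadius_nonneg (T : H →L[ℂ] H) : 0 ≤ numRadius T :=
  Real.sSup_nonneg (by rintro r ⟨x, hx, rfl⟩; positivity)

lemma numRadius_bddAbove (T : H →L[ℂ] H) :
    BddAbove {r : ℝ | ∃ x : H, ‖x‖ = 1 ∧ r = ‖(inner ℂ (T x) x : ℂ)‖} := by
  refine ⟨‖T‖, ?_⟩
  rintro r ⟨x, hx, rfl⟩
  calc ‖(⟪T x, x⟫ : ℂ)‖ ≤ ‖T x‖ * ‖x‖ := norm_inner_le_norm _ _
    _ ≤ (‖T‖ * ‖x‖) * ‖x‖ := by gcongr; exact T.le_opNorm x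
    _ = ‖T‖ := by rw [hx]; ring

lemma le_numRadius (T : H →L[ℂ] H) {x : H} (hx : ‖x‖ = 1) :
    ‖(⟪T x, x⟫ : ℂ)‖ ≤ numRadius T :=
  le_csSup (numRadius_bddAbove T) ⟨x, hx, rfl⟩

lemma buzano {e a b : H} (he : ‖e‖ = 1) :
    ‖((⟪a, e⟫ : ℂ) * ⟪e, b⟫)‖ ≤ (‖a‖ * ‖b‖ + ‖(⟪a, b⟫ : ℂ)‖) / 2 := by
  set q : H := ((2 : ℂ) * ⟪e, a⟫) • e - a with hq
  have hee : (⟪e, e⟫ : ℂ) = 1 := by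
    rw [inner_self_eq_norm_sq_to_K, he]; norm_num
  have hqa : (⟪q, q⟫ : ℂ) = ⟪a, a⟫ := by
    simp only [hq, inner_sub_left, inner_sub_right, inner_smul_left, inner_smul_right,
      inner_conj_symm, map_mul, map_ofNat, hee]
    ring
  have hqnorm : ‖q‖ = ‖a‖ := by
    rw [inner_self_eq_norm_sq_to_K, inner_self_eq_norm_sq_to_K] at hqa
    have h2 : (‖q‖ : ℝ) ^ 2 = (‖a‖ : ℝ) ^ 2 := by exact_mod_cast hqa
    nlinarith [norm_nonneg q, norm_nonneg a]
  have key : ((⟪a, e⟫ : ℂ) * ⟪e, b⟫) = ((⟪q, b⟫ : ℂ) + ⟪a, b⟫) / 2 := by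
    simp only [hq, inner_sub_left, inner_smul_left, map_mul, map_ofNat, inner_conj_symm]
    ring
  rw [key]
  calc ‖((⟪q, b⟫ : ℂ) + ⟪a, b⟫) / 2‖ = ‖(⟪q, b⟫ : ℂ) + ⟪a, b⟫‖ / 2 := by
        rw [norm_div]; norm_num
    _ ≤ (‖(⟪q, b⟫ : ℂ)‖ + ‖(⟪a, b⟫ : ℂ)‖) / 2 := by gcongr; exact norm_add_le _ _
    _ ≤ (‖q‖ * ‖b‖ + ‖(⟪a, b⟫ : ℂ)‖) / 2 := by gcongr; exact norm_inner_le_norm _ _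
    _ = (‖a‖ * ‖b‖ + ‖(⟪a, b⟫ : ℂ)‖) / 2 := by rw [hqnorm]

variable [CompleteSpace H]

lemma selfadj_apply_norm_le {N : H →L[ℂ] H} (hN : ContinuousLinearMap.adjoint N = N)
    {K : ℝ} (hK : 0 ≤ K) (h : ∀ y : H, ‖y‖ = 1 → ‖(⟪N y, y⟫ : ℂ)‖ ≤ K)
    {x : H} (hx : ‖x‖ = 1) : ‖N x‖ ≤ K := by
  have h' : ∀ y : H, ‖(⟪N y, y⟫ : ℂ)‖ ≤ K * ‖y‖ ^ 2 := by
    intro y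
    rcases eq_or_ne y 0 with rfl | hy
    · simp
    · have hny : (0 : ℝ) < ‖y‖ := norm_pos_iff.mpr hy
      set u : H := ((‖y‖ : ℂ))⁻¹ • y with hu
      have hu1 : ‖u‖ = 1 := by
        rw [hu, norm_smul, norm_inv, Complex.norm_real, Real.norm_eq_abs,
          abs_of_nonneg (norm_nonneg y)]
        field_simp
      have := h u hu1
      have hexp : (⟪N u, u⟫ : ℂ) = ((‖y‖ : ℂ))⁻¹ * (conj ((‖y‖ : ℂ))⁻¹ * ⟪N y, y⟫) := by
        rw [hu, map_smul, inner_smul_left, inner_smul_right]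
        ring
      rw [hexp] at this
      rw [norm_mul, norm_mul, norm_inv, RingHomIsometric.norm_map, norm_inv,
        Complex.norm_real, Real.norm_eq_abs, abs_of_nonneg (norm_nonneg y)] at this
      calc ‖(⟪N y, y⟫ : ℂ)‖ = ‖y‖ ^ 2 * (‖y‖⁻¹ * (‖y‖⁻¹ * ‖(⟪N y, y⟫ : ℂ)‖)) := by
            field_simp
        _ ≤ ‖y‖ ^ 2 * K := by gcongr
        _ = K * ‖y‖ ^ 2 := by ring
  rcases eq_or_ne (N x) 0 with h0 | h0
  · rw [h0]; simpa using hK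
  have hnx : (0 : ℝ) < ‖N x‖ := norm_pos_iff.mpr h0
  set v : H := ((‖N x‖ : ℂ))⁻¹ • N x with hv
  have hv1 : ‖v‖ = 1 := by
    rw [hv, norm_smul, norm_inv, Complex.norm_real, Real.norm_eq_abs,
      abs_of_nonneg (norm_nonneg _)]
    field_simp
  -- polarization
  have hconj : (⟪N v, x⟫ : ℂ) = conj (⟪N x, v⟫ : ℂ) := by
    calc (⟪N v, x⟫ : ℂ) = ⟪(ContinuousLinearMap.adjoint N) v, x⟫ := by rw [hN]
      _ = ⟪v, N x⟫ := ContinuousLinearMap.adjoint_inner_left N x v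
      _ = conj (⟪N x, v⟫ : ℂ) := (inner_conj_symm _ _).symm
  have hexp : (⟪N (x + v), x + v⟫ : ℂ) - ⟪N (x - v), x - v⟫
      = 2 * ((⟪N x, v⟫ : ℂ) + ⟪N v, x⟫) := by
    simp only [map_add, map_sub, inner_add_left, inner_add_right, inner_sub_left,
      inner_sub_right]
    ring
  have hre : 4 * Complex.re (⟪N x, v⟫ : ℂ)
      = Complex.re ((⟪N (x + v), x + v⟫ : ℂ) - ⟪N (x - v), x - v⟫) := by
    rw [hexp, hconj, Complex.add_conj]
    simp
    ring
  have hpar : ‖x + v‖ ^ 2 + ‖x - v‖ ^ 2 = 4 := by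
    have := parallelogram_law_with_norm ℂ x v
    rw [hx, hv1] at this
    linarith
  have hb1 : Complex.re ((⟪N (x + v), x + v⟫ : ℂ) - ⟪N (x - v), x - v⟫)
      ≤ K * ‖x + v‖ ^ 2 + K * ‖x - v‖ ^ 2 := by
    calc Complex.re ((⟪N (x + v), x + v⟫ : ℂ) - ⟪N (x - v), x - v⟫)
        ≤ ‖((⟪N (x + v), x + v⟫ : ℂ) - ⟪N (x - v), x - v⟫)‖ := Complex.re_le_norm _
      _ ≤ ‖(⟪N (x + v), x + v⟫ : ℂ)‖ + ‖(⟪N (x - v), x - v⟫ : ℂ)‖ := norm_sub_le _ _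
      _ ≤ K * ‖x + v‖ ^ 2 + K * ‖x - v‖ ^ 2 := add_le_add (h' _) (h' _)
  have hne : ((‖N x‖ : ℂ)) ≠ 0 := by exact_mod_cast hnx.ne'
  have hrev : Complex.re (⟪N x, v⟫ : ℂ) = ‖N x‖ := by
    rw [hv, inner_smul_right, inner_self_eq_norm_sq_to_K]
    simp [sq]
    field_simp
  have : 4 * ‖N x‖ ≤ 4 * K := by
    rw [← hrev]
    calc 4 * Complex.re (⟪N x, v⟫ : ℂ)
        ≤ K * ‖x + v‖ ^ 2 + K * ‖x - v‖ ^ 2 := by rw [hre]; exact hb1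
      _ = K * (‖x + v‖ ^ 2 + ‖x - v‖ ^ 2) := by ring
      _ = 4 * K := by rw [hpar]; ring
  linarith

lemma re_inner_self (y : H) : ((⟪y, y⟫ : ℂ)).re = ‖y‖ ^ 2 := by
  rw [inner_self_eq_norm_sq_to_K]
  simp [sq]

lemma lam_spec (c : ℂ) :
    ‖(if c = 0 then 1 else c / ‖c‖ : ℂ)‖ = 1 ∧
      (starRingEnd ℂ) (if c = 0 then 1 else c / ‖c‖ : ℂ) * c = (‖c‖ : ℂ) := by
  rcases eq_or_ne c 0 with rfl | hc
  · simp
  · have hc' : (‖c‖ : ℝ) ≠ 0 := by simpa using hc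
    rw [if_neg hc]
    constructor
    · rw [norm_div, Complex.norm_real, Real.norm_eq_abs, _root_.abs_of_nonneg (norm_nonneg c)]
      exact div_self hc'
    · rw [map_div₀, Complex.conj_ofReal, div_mul_eq_mul_div, mul_comm, Complex.mul_conj,
        Complex.normSq_eq_norm_sq]
      norm_cast
      rw [sq, mul_div_assoc, div_self hc', mul_one]

set_option maxHeartbeats 1000000 in
lemma key_ineq (X R : H →L[ℂ] H)
    (hR : R = (ContinuousLinearMap.adjoint X).comp X + X.comp (ContinuousLinearMap.adjoint X))
    {x : H} (hx : ‖x‖ = 1) :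
    ‖(⟪X x, x⟫ : ℂ)‖ ^ 4 ≤ (1 / 16 : ℝ) * ‖R‖ ^ 2 + (1 / 4 : ℝ) * (numRadius (X.comp X)) ^ 2
      + (1 / 8 : ℝ) * numRadius ((X.comp X).comp R + R.comp (X.comp X)) := by
  classical
  set adX := ContinuousLinearMap.adjoint X with hadX
  set X2 := X.comp X with hX2
  set C := X2.comp R + R.comp X2 with hC
  set c : ℂ := ⟪X2 x, x⟫ with hc
  set lam : ℂ := if c = 0 then 1 else c / ‖c‖ with hlam
  obtain ⟨hlam1, hlamc⟩ := lam_spec c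
  rw [← hlam] at hlam1 hlamc
  set M := lam • X2 with hM
  set N := M + ContinuousLinearMap.adjoint M with hN
  have hRsa : ContinuousLinearMap.adjoint R = R := by
    rw [hR, map_add, ContinuousLinearMap.adjoint_comp, ContinuousLinearMap.adjoint_comp,
      ContinuousLinearMap.adjoint_adjoint]
  have hNsa : ContinuousLinearMap.adjoint N = N := by
    rw [hN, map_add, ContinuousLinearMap.adjoint_adjoint, add_comm]
  have hw2 : 0 ≤ numRadius X2 := numRadius_nonneg _
  have hwC : 0 ≤ numRadius C := numRadius_nonneg _
  -- inner products with N
  have hNinner : ∀ y : H, (⟪N y, y⟫ : ℂ)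
      = (((2 : ℝ) * ((starRingEnd ℂ) lam * ⟪X2 y, y⟫).re : ℝ) : ℂ) := by
    intro y
    rw [hN, ContinuousLinearMap.add_apply, inner_add_left]
    have h1 : (⟪M y, y⟫ : ℂ) = (starRingEnd ℂ) lam * ⟪X2 y, y⟫ := by
      rw [hM, ContinuousLinearMap.smul_apply, inner_smul_left]
    have h2 : (⟪(ContinuousLinearMap.adjoint M) y, y⟫ : ℂ)
        = (starRingEnd ℂ) ((starRingEnd ℂ) lam * (⟪X2 y, y⟫ : ℂ)) := by
      rw [ContinuousLinearMap.adjoint_inner_left, ← inner_conj_symm, h1]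
    rw [h1, h2]
    exact Complex.add_conj _
  have hNbound : ∀ y : H, ‖y‖ = 1 → ‖(⟪N y, y⟫ : ℂ)‖ ≤ 2 * numRadius X2 := by
    intro y hy
    rw [hNinner y]
    rw [Complex.norm_real, Real.norm_eq_abs, abs_mul, abs_two]
    have h1 : |((starRingEnd ℂ) lam * (⟪X2 y, y⟫ : ℂ)).re|
        ≤ ‖(starRingEnd ℂ) lam * (⟪X2 y, y⟫ : ℂ)‖ := Complex.abs_re_le_norm _
    have h2 : ‖(starRingEnd ℂ) lam * (⟪X2 y, y⟫ : ℂ)‖ = ‖(⟪X2 y, y⟫ : ℂ)‖ := by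
      rw [norm_mul, RCLike.norm_conj, hlam1, one_mul]
    have h3 := le_numRadius X2 hy
    rw [h2] at h1
    linarith
  -- Step A: Buzano + AM-GM
  have hbuz : ‖(⟪X x, x⟫ : ℂ)‖ ^ 2 ≤ (‖X x‖ * ‖adX x‖ + ‖c‖) / 2 := by
    have hb := buzano (a := X x) (b := adX x) hx
    have e1 : (⟪x, adX x⟫ : ℂ) = ⟪X x, x⟫ := ContinuousLinearMap.adjoint_inner_right X x x
    have e2 : (⟪X x, adX x⟫ : ℂ) = c := by
      rw [hadX, ContinuousLinearMap.adjoint_inner_right, hc, hX2]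
      rfl
    rw [e1, e2] at hb
    calc ‖(⟪X x, x⟫ : ℂ)‖ ^ 2 = ‖(⟪X x, x⟫ : ℂ) * ⟪X x, x⟫‖ := by rw [norm_mul]; ring
      _ ≤ (‖X x‖ * ‖adX x‖ + ‖c‖) / 2 := hb
  have hamgm : ‖X x‖ * ‖adX x‖ ≤ (‖X x‖ ^ 2 + ‖adX x‖ ^ 2) / 2 := by
    nlinarith [sq_nonneg (‖X x‖ - ‖adX x‖)]
  -- re of ⟪R x, x⟫
  have hRinner : ((⟪R x, x⟫ : ℂ)).re = ‖X x‖ ^ 2 + ‖adX x‖ ^ 2 := by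
    have t1 : (⟪((ContinuousLinearMap.adjoint X).comp X) x, x⟫ : ℂ) = ⟪X x, X x⟫ := by
      rw [ContinuousLinearMap.comp_apply, ContinuousLinearMap.adjoint_inner_left]
    have t2 : (⟪(X.comp (ContinuousLinearMap.adjoint X)) x, x⟫ : ℂ) = ⟪adX x, adX x⟫ := by
      rw [ContinuousLinearMap.comp_apply, ← hadX, ← ContinuousLinearMap.adjoint_inner_right]
    rw [hR, ContinuousLinearMap.add_apply, inner_add_left, Complex.add_re, t1, t2,
      re_inner_self, re_inner_self]
  -- Step 1
  have hstep1 : ‖(⟪X x, x⟫ : ℂ)‖ ^ 2 ≤ (1 / 4 : ℝ) * ((⟪R x + N x, x⟫ : ℂ)).re := by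
    have hre : ((⟪R x + N x, x⟫ : ℂ)).re = (‖X x‖ ^ 2 + ‖adX x‖ ^ 2) + 2 * ‖c‖ := by
      rw [inner_add_left, Complex.add_re, hRinner, hNinner x, ← hc, hlamc]
      rw [Complex.ofReal_re, Complex.ofReal_re]
    rw [hre]
    linarith
  -- Step 2: Cauchy–Schwarz
  have hcs : ((⟪R x + N x, x⟫ : ℂ)).re ≤ ‖R x + N x‖ := by
    calc ((⟪R x + N x, x⟫ : ℂ)).re ≤ ‖(⟪R x + N x, x⟫ : ℂ)‖ := Complex.re_le_norm _
      _ ≤ ‖R x + N x‖ * ‖x‖ := norm_inner_le_norm _ _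
      _ = ‖R x + N x‖ := by rw [hx, mul_one]
  have hre_nn : 0 ≤ ((⟪R x + N x, x⟫ : ℂ)).re := by nlinarith [sq_nonneg ‖(⟪X x, x⟫ : ℂ)‖]
  have hstep2 : ‖(⟪X x, x⟫ : ℂ)‖ ^ 4 ≤ (1 / 16 : ℝ) * ‖R x + N x‖ ^ 2 := by
    have h4 : ‖(⟪X x, x⟫ : ℂ)‖ ^ 4 = (‖(⟪X x, x⟫ : ℂ)‖ ^ 2) ^ 2 := by ring
    rw [h4]
    nlinarith [sq_nonneg ‖(⟪X x, x⟫ : ℂ)‖, hstep1, hcs, hre_nn, norm_nonneg (R x + N x)]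
  -- expansion of ‖R x + N x‖²
  have hexp : ‖R x + N x‖ ^ 2
      = ‖R x‖ ^ 2 + 2 * ((⟪R x, N x⟫ : ℂ)).re + ‖N x‖ ^ 2 := by
    have := norm_add_sq (𝕜 := ℂ) (R x) (N x)
    rwa [RCLike.re_to_complex] at this
  -- term bounds
  have hterm1 : ‖R x‖ ^ 2 ≤ ‖R‖ ^ 2 := by
    have := R.le_opNorm x
    rw [hx, mul_one] at this
    nlinarith [norm_nonneg (R x), norm_nonneg R]
  have hterm3 : ‖N x‖ ^ 2 ≤ (2 * numRadius X2) ^ 2 := by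
    have := selfadj_apply_norm_le (K := 2 * numRadius X2) hNsa (by linarith) hNbound hx
    nlinarith [norm_nonneg (N x)]
  -- cross term
  have hterm2 : ((⟪R x, N x⟫ : ℂ)).re ≤ numRadius C := by
    have u1 : (⟪R x, M x⟫ : ℂ) = lam * (starRingEnd ℂ) (⟪(R.comp X2) x, x⟫ : ℂ) := by
      rw [hM, ContinuousLinearMap.smul_apply, inner_smul_right]
      congr 1
      calc (⟪R x, X2 x⟫ : ℂ) = ⟪(ContinuousLinearMap.adjoint R) x, X2 x⟫ := by rw [hRsa]
        _ = ⟪x, R (X2 x)⟫ := ContinuousLinearMap.adjoint_inner_left R (X2 x) x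
        _ = ⟪x, (R.comp X2) x⟫ := rfl
        _ = (starRingEnd ℂ) (⟪(R.comp X2) x, x⟫ : ℂ) := (inner_conj_symm _ _).symm
    have u2 : (⟪R x, (ContinuousLinearMap.adjoint M) x⟫ : ℂ)
        = (starRingEnd ℂ) lam * (⟪(X2.comp R) x, x⟫ : ℂ) := by
      have hMadj : ContinuousLinearMap.adjoint M
          = (starRingEnd ℂ) lam • ContinuousLinearMap.adjoint X2 := by
        rw [hM, ← ContinuousLinearMap.star_eq_adjoint, ← ContinuousLinearMap.star_eq_adjoint,
          star_smul, RCLike.star_def]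
      rw [hMadj, ContinuousLinearMap.smul_apply, inner_smul_right]
      congr 1
      rw [ContinuousLinearMap.adjoint_inner_right]
      rfl
    have hsplit : ((⟪R x, N x⟫ : ℂ)).re = ((starRingEnd ℂ) lam * (⟪C x, x⟫ : ℂ)).re := by
      rw [hN, ContinuousLinearMap.add_apply, inner_add_right, Complex.add_re, u1, u2]
      rw [hC, ContinuousLinearMap.add_apply, inner_add_left, mul_add, Complex.add_re]
      have v2 : (lam * (starRingEnd ℂ) (⟪(R.comp X2) x, x⟫ : ℂ)).re
          = ((starRingEnd ℂ) lam * (⟪(R.comp X2) x, x⟫ : ℂ)).re := by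
        rw [← Complex.conj_re (lam * (starRingEnd ℂ) (⟪(R.comp X2) x, x⟫ : ℂ)), map_mul,
          Complex.conj_conj]
      rw [v2]
      ring
    rw [hsplit]
    calc ((starRingEnd ℂ) lam * (⟪C x, x⟫ : ℂ)).re
        ≤ ‖(starRingEnd ℂ) lam * (⟪C x, x⟫ : ℂ)‖ := Complex.re_le_norm _
      _ = ‖(⟪C x, x⟫ : ℂ)‖ := by rw [norm_mul, RCLike.norm_conj, hlam1, one_mul]
      _ ≤ numRadius C := le_numRadius C hx
  -- combine
  calc ‖(⟪X x, x⟫ : ℂ)‖ ^ 4 ≤ (1 / 16 : ℝ) * ‖R x + N x‖ ^ 2 := hstep2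
    _ = (1 / 16 : ℝ) * (‖R x‖ ^ 2 + 2 * ((⟪R x, N x⟫ : ℂ)).re + ‖N x‖ ^ 2) := by rw [hexp]
    _ ≤ (1 / 16 : ℝ) * (‖R‖ ^ 2 + 2 * numRadius C + (2 * numRadius X2) ^ 2) := by
        linarith
    _ = (1 / 16 : ℝ) * ‖R‖ ^ 2 + (1 / 4 : ℝ) * (numRadius X2) ^ 2
        + (1 / 8 : ℝ) * numRadius C := by ring

end Aux

theorem numRadius_pow_four_upper
    {H : Type*} [NormedAddCommGroup H] [InnerProductSpace ℂ H] [CompleteSpace H]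
    (X : H →L[ℂ] H) (R : H →L[ℂ] H)
    (hR : R = (ContinuousLinearMap.adjoint X).comp X + X.comp (ContinuousLinearMap.adjoint X)) :
    (numRadius X) ^ 4 ≤ (1 / 16 : ℝ) * ‖R‖ ^ 2 + (1 / 4 : ℝ) * (numRadius (X.comp X)) ^ 2
      + (1 / 8 : ℝ) * numRadius ((X.comp X).comp R + R.comp (X.comp X)) := by
  set B := (1 / 16 : ℝ) * ‖R‖ ^ 2 + (1 / 4 : ℝ) * (numRadius (X.comp X)) ^ 2
      + (1 / 8 : ℝ) * numRadius ((X.comp X).comp R + R.comp (X.comp X)) with hB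
  have hBnn : 0 ≤ B := by
    have h1 := numRadius_nonneg (X.comp X)
    have h2 := numRadius_nonneg ((X.comp X).comp R + R.comp (X.comp X))
    have h3 : (0:ℝ) ≤ ‖R‖ ^ 2 := sq_nonneg _
    have h4 : (0:ℝ) ≤ (numRadius (X.comp X)) ^ 2 := sq_nonneg _
    rw [hB]
    linarith
  have hXle : numRadius X ≤ Real.sqrt (Real.sqrt B) := by
    apply Real.sSup_le _ (Real.sqrt_nonneg _)
    rintro r ⟨x, hx, rfl⟩
    have hk := key_ineq X R hR hx
    rw [← hB] at hk
    apply Real.le_sqrt_of_sq_le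
    apply Real.le_sqrt_of_sq_le
    calc (‖(inner ℂ (X x) x : ℂ)‖ ^ 2) ^ 2 = ‖(inner ℂ (X x) x : ℂ)‖ ^ 4 := by ring
      _ ≤ B := hk
  calc (numRadius X) ^ 4 ≤ (Real.sqrt (Real.sqrt B)) ^ 4 := by
        have h0 := numRadius_nonneg X
        exact pow_le_pow_left₀ h0 hXle 4
    _ = B := by
        rw [show (4:ℕ) = 2 * 2 from rfl, pow_mul, Real.sq_sqrt (Real.sqrt_nonneg _),
          Real.sq_sqrt hBnn]
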